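/- Let τ, σ ∈ H¹(𝕋¹; ℝ³) satisfy min_x |τ(x)| ≥ 1/C and min_x |σ(x)| ≥ 1/C for some finite C > 0, and define A_τ := Id - (1/2π)∫_{𝕋¹} (τ⊗τ)/|τ|² dx. Then the operator norm estimate ‖A_τ - A_σ‖_op ≤ 2C²·‖τ+σ‖_{L²(𝕋¹)}·‖τ-σ‖_{L²(𝕋¹)} holds. -/

import Mathlib

open MeasureTheory Real


lemma my_cs {a b : ℝ} (hab : a ≤ b) (f g : ℝ → ℝ)
    (hf2 : IntervalIntegrable (fun x => f x ^ 2) volume a b)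
    (hg2 : IntervalIntegrable (fun x => g x ^ 2) volume a b)
    (hfg : IntervalIntegrable (fun x => f x * g x) volume a b) :
    ∫ x in a..b, f x * g x ≤
      Real.sqrt (∫ x in a..b, f x ^ 2) * Real.sqrt (∫ x in a..b, g x ^ 2) := by
  set A := ∫ x in a..b, f x ^ 2 with hA
  set D := ∫ x in a..b, g x ^ 2 with hD
  have hA0 : 0 ≤ A := intervalIntegral.integral_nonneg hab (fun x _ => sq_nonneg _)
  have hD0 : 0 ≤ D := intervalIntegral.integral_nonneg hab (fun x _ => sq_nonneg _)
  have key : ∀ s : ℝ, 0 < s → (∫ x in a..b, f x * g x) ≤ (s * A + D / s) / 2 := by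
    intro s hs
    have hmono : (∫ x in a..b, f x * g x) ≤
        ∫ x in a..b, (s * f x ^ 2 + g x ^ 2 / s) / 2 := by
      apply intervalIntegral.integral_mono_on hab hfg
      · exact (((hf2.const_mul s).add (hg2.div_const s)).div_const 2)
      · intro x _
        rw [le_div_iff₀ (by norm_num : (0:ℝ) < 2)]
        have h2 : g x ^ 2 / s = g x ^ 2 * s⁻¹ := div_eq_mul_inv _ _
        have h3 : 0 < s⁻¹ := inv_pos.mpr hs
        nlinarith [sq_nonneg (s * f x - g x), mul_pos hs h3, mul_inv_cancel₀ hs.ne']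
    have heq : (∫ x in a..b, (s * f x ^ 2 + g x ^ 2 / s) / 2)
        = (s * A + D / s) / 2 := by
      rw [intervalIntegral.integral_div, intervalIntegral.integral_add
        (hf2.const_mul s) (hg2.div_const s), intervalIntegral.integral_const_mul,
        intervalIntegral.integral_div]
    linarith [hmono, heq.le, heq.ge]
  have hε : ∀ ε : ℝ, 0 < ε → (∫ x in a..b, f x * g x) ≤
      (Real.sqrt A + ε) * (Real.sqrt D + ε) := by
    intro ε hε
    have hsa : 0 < Real.sqrt A + ε := by positivity
    have hsd : 0 < Real.sqrt D + ε := by positivity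
    have hs : 0 < (Real.sqrt D + ε) / (Real.sqrt A + ε) := by positivity
    refine (key _ hs).trans ?_
    have h1 : (Real.sqrt D + ε) / (Real.sqrt A + ε) * A ≤
        (Real.sqrt A + ε) * (Real.sqrt D + ε) := by
      rw [div_mul_eq_mul_div, div_le_iff₀ hsa]
      have : A ≤ (Real.sqrt A + ε) ^ 2 := by
        nlinarith [Real.sq_sqrt hA0, Real.sqrt_nonneg A, hε]
      nlinarith [hsd.le]
    have h2 : D / ((Real.sqrt D + ε) / (Real.sqrt A + ε)) ≤
        (Real.sqrt A + ε) * (Real.sqrt D + ε) := by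
      rw [div_div_eq_mul_div, div_le_iff₀ hsd]
      have : D ≤ (Real.sqrt D + ε) ^ 2 := by
        nlinarith [Real.sq_sqrt hD0, Real.sqrt_nonneg D, hε]
      nlinarith [hsa.le]
    linarith
  have hlim : Filter.Tendsto (fun ε : ℝ => (Real.sqrt A + ε) * (Real.sqrt D + ε))
      (nhdsWithin 0 (Set.Ioi 0)) (nhds (Real.sqrt A * Real.sqrt D)) := by
    have : Filter.Tendsto (fun ε : ℝ => (Real.sqrt A + ε) * (Real.sqrt D + ε))
        (nhds 0) (nhds ((Real.sqrt A + 0) * (Real.sqrt D + 0))) := by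
      exact ((tendsto_const_nhds.add Filter.tendsto_id).mul
        (tendsto_const_nhds.add Filter.tendsto_id))
    simpa using this.mono_left nhdsWithin_le_nhds
  exact ge_of_tendsto hlim (eventually_nhdsWithin_of_forall (fun ε hε' => hε ε hε'))


lemma my_key {E : Type*} [NormedAddCommGroup E] [InnerProductSpace ℝ E]
    (C : ℝ) (hC : 0 < C) (a b v : E) (ha : 1 / C ≤ ‖a‖) (hb : 1 / C ≤ ‖b‖) :
    ‖((inner ℝ a v : ℝ) / ‖a‖ ^ 2) • a - ((inner ℝ b v : ℝ) / ‖b‖ ^ 2) • b‖ ≤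
      2 * C ^ 2 * ‖a + b‖ * ‖a - b‖ * ‖v‖ := by
  have ha0 : (0:ℝ) < ‖a‖ := lt_of_lt_of_le (by positivity) ha
  have hb0 : (0:ℝ) < ‖b‖ := lt_of_lt_of_le (by positivity) hb
  set A := ‖a‖ ^ 2 with hAdef
  set B := ‖b‖ ^ 2 with hBdef
  have hA0 : 0 < A := by positivity
  have hB0 : 0 < B := by positivity
  set α : ℝ := inner ℝ a v with hα
  set β : ℝ := inner ℝ b v with hβ
  have hCA : 1 / A ≤ C ^ 2 := by
    rw [div_le_iff₀ hA0]
    have : 1 / C ^ 2 ≤ A := by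
      have := pow_le_pow_left₀ (by positivity : (0:ℝ) ≤ 1 / C) ha 2
      rw [div_pow, one_pow] at this
      rwa [hAdef]
    have hC2 : (0:ℝ) < C ^ 2 := by positivity
    rw [div_le_iff₀ hC2] at this
    linarith
  -- decomposition
  have hdec : (α / A) • a - (β / B) • b =
      A⁻¹ • (α • a - β • b) + ((A⁻¹ - B⁻¹) * β) • b := by
    rw [div_eq_mul_inv, div_eq_mul_inv]
    module
  -- bound on α•a - β•b
  have h1 : α • a - β • b = (2:ℝ)⁻¹ • (((inner ℝ (a + b) v : ℝ)) • (a - b)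
      + ((inner ℝ (a - b) v : ℝ)) • (a + b)) := by
    rw [inner_add_left, inner_sub_left, hα, hβ]
    module
  have e1 : ‖α • a - β • b‖ ≤ ‖a + b‖ * ‖a - b‖ * ‖v‖ := by
    rw [h1, norm_smul]
    have c1 : ‖((inner ℝ (a + b) v : ℝ)) • (a - b)‖ ≤ ‖a + b‖ * ‖v‖ * ‖a - b‖ := by
      rw [norm_smul]
      gcongr
      exact (abs_real_inner_le_norm _ _)
    have c2 : ‖((inner ℝ (a - b) v : ℝ)) • (a + b)‖ ≤ ‖a - b‖ * ‖v‖ * ‖a + b‖ := by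
      rw [norm_smul]
      gcongr
      exact (abs_real_inner_le_norm _ _)
    have := norm_add_le (((inner ℝ (a + b) v : ℝ)) • (a - b)) (((inner ℝ (a - b) v : ℝ)) • (a + b))
    have hn : ‖(2:ℝ)⁻¹‖ = (2:ℝ)⁻¹ := by norm_num
    rw [hn]
    nlinarith [norm_nonneg (a+b), norm_nonneg (a-b), norm_nonneg v]
  -- bound on B - A
  have e2 : |B - A| ≤ ‖a + b‖ * ‖a - b‖ := by
    have : B - A = inner ℝ (b - a) (b + a) := by
      rw [inner_sub_left, inner_add_right, inner_add_right,
        real_inner_self_eq_norm_sq, real_inner_self_eq_norm_sq, real_inner_comm a b]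
      ring
    rw [this]
    calc |(inner ℝ (b - a) (b + a) : ℝ)| ≤ ‖b - a‖ * ‖b + a‖ := abs_real_inner_le_norm _ _
      _ = ‖a + b‖ * ‖a - b‖ := by rw [norm_sub_rev, add_comm b a]; ring
  have e3 : |β| ≤ ‖b‖ * ‖v‖ := abs_real_inner_le_norm _ _
  -- assemble
  have t1 : ‖A⁻¹ • (α • a - β • b)‖ ≤ C ^ 2 * (‖a + b‖ * ‖a - b‖ * ‖v‖) := by
    rw [norm_smul, norm_inv, Real.norm_eq_abs, abs_of_pos hA0]
    calc A⁻¹ * ‖α • a - β • b‖ ≤ A⁻¹ * (‖a + b‖ * ‖a - b‖ * ‖v‖) := by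
          have := inv_nonneg.mpr hA0.le
          exact mul_le_mul_of_nonneg_left e1 this
      _ ≤ C ^ 2 * (‖a + b‖ * ‖a - b‖ * ‖v‖) := by
          have h4 : A⁻¹ ≤ C ^ 2 := by rwa [inv_eq_one_div]
          have h5 : (0:ℝ) ≤ ‖a + b‖ * ‖a - b‖ * ‖v‖ := by positivity
          exact mul_le_mul_of_nonneg_right h4 h5
  have t2 : ‖((A⁻¹ - B⁻¹) * β) • b‖ ≤ C ^ 2 * (‖a + b‖ * ‖a - b‖ * ‖v‖) := by
    rw [norm_smul, Real.norm_eq_abs, abs_mul]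
    have hdiffinv : |A⁻¹ - B⁻¹| = |B - A| / (A * B) := by
      rw [inv_sub_inv hA0.ne' hB0.ne', abs_div]
      congr 1
      exact abs_of_pos (mul_pos hA0 hB0)
    rw [hdiffinv]
    have hBb : ‖b‖ * ‖b‖ = B := by rw [hBdef]; ring
    calc |B - A| / (A * B) * |β| * ‖b‖
        ≤ ‖a + b‖ * ‖a - b‖ / (A * B) * (‖b‖ * ‖v‖) * ‖b‖ := by
          gcongr <;> first | exact e2 | exact e3 | positivity
      _ = (1 / A) * (‖a + b‖ * ‖a - b‖ * ‖v‖) * ((‖b‖ * ‖b‖) / B) := by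
          field_simp
      _ = (1 / A) * (‖a + b‖ * ‖a - b‖ * ‖v‖) := by
          rw [hBb, div_self hB0.ne', mul_one]
      _ ≤ C ^ 2 * (‖a + b‖ * ‖a - b‖ * ‖v‖) := by
          have h5 : (0:ℝ) ≤ ‖a + b‖ * ‖a - b‖ * ‖v‖ := by positivity
          exact mul_le_mul_of_nonneg_right hCA h5
  calc ‖(α / A) • a - (β / B) • b‖
      = ‖A⁻¹ • (α • a - β • b) + ((A⁻¹ - B⁻¹) * β) • b‖ := by rw [hdec]
    _ ≤ ‖A⁻¹ • (α • a - β • b)‖ + ‖((A⁻¹ - B⁻¹) * β) • b‖ := norm_add_le _ _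
    _ ≤ C ^ 2 * (‖a + b‖ * ‖a - b‖ * ‖v‖) + C ^ 2 * (‖a + b‖ * ‖a - b‖ * ‖v‖) :=
        add_le_add t1 t2
    _ = 2 * C ^ 2 * ‖a + b‖ * ‖a - b‖ * ‖v‖ := by ring


/-- The matrix `A_τ = Id - (1/2π)∫ τ⊗τ/|τ|²`, viewed as the linear action
`v ↦ v - (1/2π)∫ (⟨τ(x),v⟩/|τ(x)|²)·τ(x) dx`. -/
noncomputable def Amap (τ : ℝ → EuclideanSpace ℝ (Fin 3))
    (v : EuclideanSpace ℝ (Fin 3)) : EuclideanSpace ℝ (Fin 3) :=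
  v - (1 / (2 * π)) • ∫ x in (-π)..π, (((inner ℝ (τ x) v : ℝ)) / ‖τ x‖ ^ 2) • τ x

/-- Normalized `L²(𝕋¹)` norm. -/
noncomputable def L2norm (f : ℝ → EuclideanSpace ℝ (Fin 3)) : ℝ :=
  Real.sqrt ((1 / (2 * π)) * ∫ x in (-π)..π, ‖f x‖ ^ 2)

/-- If `τ, σ ∈ H¹(𝕋¹;ℝ³)` satisfy `min|τ| ≥ 1/C`, `min|σ| ≥ 1/C`, then
`‖A_τ - A_σ‖_op ≤ 2C²‖τ+σ‖_{L²}‖τ-σ‖_{L²}`. -/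
theorem stmt9 (τ σ : ℝ → EuclideanSpace ℝ (Fin 3)) (C : ℝ) (hC : 0 < C)
    (hτcont : Continuous τ) (hσcont : Continuous σ)
    (hτper : Function.Periodic τ (2 * π)) (hσper : Function.Periodic σ (2 * π))
    (hτlow : ∀ x, 1 / C ≤ ‖τ x‖) (hσlow : ∀ x, 1 / C ≤ ‖σ x‖) :
    ∀ v : EuclideanSpace ℝ (Fin 3),
      ‖Amap τ v - Amap σ v‖ ≤
        2 * C ^ 2 * L2norm (τ + σ) * L2norm (τ - σ) * ‖v‖ := by
  intro v
  have hpi : (0:ℝ) < π := Real.pi_pos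
  have hab : -π ≤ π := by linarith
  have hτ0 : ∀ x, (0:ℝ) < ‖τ x‖ := fun x => lt_of_lt_of_le (by positivity) (hτlow x)
  have hσ0 : ∀ x, (0:ℝ) < ‖σ x‖ := fun x => lt_of_lt_of_le (by positivity) (hσlow x)
  set gτ : ℝ → EuclideanSpace ℝ (Fin 3) :=
    fun x => (((inner ℝ (τ x) v : ℝ)) / ‖τ x‖ ^ 2) • τ x with hgτ
  set gσ : ℝ → EuclideanSpace ℝ (Fin 3) :=
    fun x => (((inner ℝ (σ x) v : ℝ)) / ‖σ x‖ ^ 2) • σ x with hgσ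
  have hgτc : Continuous gτ :=
    ((hτcont.inner continuous_const).div ((hτcont.norm.pow 2))
      (fun x => by have := hτ0 x; exact pow_ne_zero 2 this.ne')).smul hτcont
  have hgσc : Continuous gσ :=
    ((hσcont.inner continuous_const).div ((hσcont.norm.pow 2))
      (fun x => by have := hσ0 x; exact pow_ne_zero 2 this.ne')).smul hσcont
  -- difference formula
  have hdiff : Amap τ v - Amap σ v = (1 / (2 * π)) • ∫ x in (-π)..π, (gσ x - gτ x) := by
    unfold Amap
    rw [intervalIntegral.integral_sub (hgσc.intervalIntegrable _ _)
      (hgτc.intervalIntegrable _ _), smul_sub]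
    abel
  -- pointwise bound
  have hpt : ∀ x, ‖gσ x - gτ x‖ ≤
      2 * C ^ 2 * (‖τ x + σ x‖ * ‖τ x - σ x‖) * ‖v‖ := by
    intro x
    have := my_key C hC (σ x) (τ x) v (hσlow x) (hτlow x)
    calc ‖gσ x - gτ x‖ ≤ 2 * C ^ 2 * ‖σ x + τ x‖ * ‖σ x - τ x‖ * ‖v‖ := this
      _ = 2 * C ^ 2 * (‖τ x + σ x‖ * ‖τ x - σ x‖) * ‖v‖ := by
          rw [add_comm (σ x) (τ x), norm_sub_rev]; ring
  -- continuity of the bound integrands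
  have hFc : Continuous fun x => ‖τ x + σ x‖ * ‖τ x - σ x‖ :=
    ((hτcont.add hσcont).norm).mul ((hτcont.sub hσcont).norm)
  have hF2c : Continuous fun x => ‖τ x + σ x‖ ^ 2 := (hτcont.add hσcont).norm.pow 2
  have hG2c : Continuous fun x => ‖τ x - σ x‖ ^ 2 := (hτcont.sub hσcont).norm.pow 2
  -- integral bound
  have hintbound : ‖∫ x in (-π)..π, (gσ x - gτ x)‖ ≤
      2 * C ^ 2 * ‖v‖ * ∫ x in (-π)..π, ‖τ x + σ x‖ * ‖τ x - σ x‖ := by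
    calc ‖∫ x in (-π)..π, (gσ x - gτ x)‖
        ≤ ∫ x in (-π)..π, ‖gσ x - gτ x‖ :=
          intervalIntegral.norm_integral_le_integral_norm hab
      _ ≤ ∫ x in (-π)..π, 2 * C ^ 2 * (‖τ x + σ x‖ * ‖τ x - σ x‖) * ‖v‖ := by
          apply intervalIntegral.integral_mono_on hab
          · exact ((hgσc.sub hgτc).norm).intervalIntegrable _ _
          · exact (((continuous_const.mul hFc).mul continuous_const)).intervalIntegrable _ _
          · exact fun x _ => hpt x
      _ = 2 * C ^ 2 * ‖v‖ * ∫ x in (-π)..π, ‖τ x + σ x‖ * ‖τ x - σ x‖ := by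
          rw [← intervalIntegral.integral_const_mul]
          congr 1
          ext x
          ring
  -- Cauchy–Schwarz
  have hcs : (∫ x in (-π)..π, ‖τ x + σ x‖ * ‖τ x - σ x‖) ≤
      Real.sqrt (∫ x in (-π)..π, ‖τ x + σ x‖ ^ 2) *
      Real.sqrt (∫ x in (-π)..π, ‖τ x - σ x‖ ^ 2) := by
    exact my_cs hab _ _ (hF2c.intervalIntegrable _ _) (hG2c.intervalIntegrable _ _)
      (hFc.intervalIntegrable _ _)
  -- final assembly
  set Is := ∫ x in (-π)..π, ‖τ x + σ x‖ ^ 2 with hIs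
  set Id := ∫ x in (-π)..π, ‖τ x - σ x‖ ^ 2 with hId
  have hIs0 : 0 ≤ Is := intervalIntegral.integral_nonneg hab (fun x _ => sq_nonneg _)
  have hId0 : 0 ≤ Id := intervalIntegral.integral_nonneg hab (fun x _ => sq_nonneg _)
  have hc0 : (0:ℝ) ≤ 1 / (2 * π) := by positivity
  have hL2s : L2norm (τ + σ) = Real.sqrt (1 / (2 * π)) * Real.sqrt Is := by
    rw [L2norm, ← Real.sqrt_mul hc0]
    congr 1
  have hL2d : L2norm (τ - σ) = Real.sqrt (1 / (2 * π)) * Real.sqrt Id := by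
    rw [L2norm, ← Real.sqrt_mul hc0]
    congr 1
  have hsqc : Real.sqrt (1 / (2 * π)) * Real.sqrt (1 / (2 * π)) = 1 / (2 * π) :=
    Real.mul_self_sqrt hc0
  rw [hdiff, norm_smul, Real.norm_eq_abs, abs_of_nonneg hc0, hL2s, hL2d]
  calc (1 / (2 * π)) * ‖∫ x in (-π)..π, (gσ x - gτ x)‖
      ≤ (1 / (2 * π)) * (2 * C ^ 2 * ‖v‖ *
          ∫ x in (-π)..π, ‖τ x + σ x‖ * ‖τ x - σ x‖) :=
        mul_le_mul_of_nonneg_left hintbound hc0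
    _ ≤ (1 / (2 * π)) * (2 * C ^ 2 * ‖v‖ * (Real.sqrt Is * Real.sqrt Id)) := by
        apply mul_le_mul_of_nonneg_left _ hc0
        apply mul_le_mul_of_nonneg_left hcs
        positivity
    _ = 2 * C ^ 2 * (Real.sqrt (1 / (2 * π)) * Real.sqrt Is) *
          (Real.sqrt (1 / (2 * π)) * Real.sqrt Id) * ‖v‖ := by
        rw [show 2 * C ^ 2 * (Real.sqrt (1 / (2 * π)) * Real.sqrt Is) *
            (Real.sqrt (1 / (2 * π)) * Real.sqrt Id) * ‖v‖
          = (Real.sqrt (1 / (2 * π)) * Real.sqrt (1 / (2 * π))) *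
            (2 * C ^ 2 * ‖v‖ * (Real.sqrt Is * Real.sqrt Id)) by ring, hsqc]
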